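/- A relation R : X ⇸ Y is a monomorphism in Rel if and only if the direct-image map ℘R : ℘X → ℘Y, U ↦ {y | ∃x ∈ U. xRy}, is injective. -/

import Mathlib

open CategoryTheory

/-- A relation `R : X ⇸ Y` is a monomorphism in `Rel` if and only if the induced
direct-image map `℘R : ℘X → ℘Y`, `U ↦ {y | ∃ x ∈ U, xRy}`, is injective. -/
theorem rel_mono_iff_direct_image_injective {X Y : RelCat} (R : X ⟶ Y) :
    Mono R ↔ Function.Injective (fun U : Set X => {y : Y | ∃ x, @Membership.mem X (Set X) Set.instMembership U x ∧ (x, y) ∈ R.rel}) := by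
  constructor
  · intro hm U V h
    let W : RelCat := PUnit
    let S : W ⟶ X := .ofRel {p | @Membership.mem X (Set X) Set.instMembership U p.2}
    let T : W ⟶ X := .ofRel {p | @Membership.mem X (Set X) Set.instMembership V p.2}
    have hST : S ≫ R = T ≫ R := by
      ext ⟨w, y⟩
      have := Set.ext_iff.mp h y
      simp only [Set.mem_setOf_eq] at this
      exact this
    have := hm.right_cancellation S T hST
    ext x
    have := Set.ext_iff.mp (congrArg RelCat.Hom.rel this) (PUnit.unit, x)
    simpa [S, T] using this
  · intro hinj
    constructor
    intro W S T h
    ext ⟨w, x⟩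
    have key := hinj (a₁ := {x | (w, x) ∈ S.rel}) (a₂ := {x | (w, x) ∈ T.rel}) ?_
    · exact Set.ext_iff.mp key x
    · ext y
      have := Set.ext_iff.mp (congrArg RelCat.Hom.rel h) (w, y)
      exact this
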